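/- Let X ⊆ ℝ^n and Y ⊆ ℝ^m be nonempty compact convex sets, let F : X×Y → ℝ and c : X → ℝ^{ñ}, d : X×Y → ℝ^{m̃} be continuous with each d_i(x,·) convex on Y for every x ∈ X, and assume for every x ∈ X there exists y ∈ Y with d(x,y) ≤ 0. Define the augmented Lagrangian L(x,y,λx,λy;ρ) = F(x,y) + (‖[λx + ρc(x)]_+‖² − ‖λx‖²)/(2ρ) − (‖[λy + ρd(x,y)]_+‖² − ‖λy‖²)/(2ρ), f*(x) = max{F(x,y) : y ∈ Y, d(x,y) ≤ 0}, f*_low = inf_{x∈X} f*(x), and F_hi = max_{X×Y} F. Fix ρ > 0, Λ > 0, λx ∈ ℝ^{ñ} with λx ≥ 0 and ‖λx‖ ≤ Λ, and λy ∈ ℝ^{m̃} with λy ≥ 0. If there exists x̄ ∈ X with c(x̄) ≤ 0 componentwise, then f*_low − Λ²/(2ρ) ≤ inf_{x∈X} sup_{y∈Y} L(x,y,λx,λy;ρ) ≤ F_hi + ‖λy‖²/(2ρ). -/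

import Mathlib

/-- Componentwise positive part `[v]₊` of a vector. -/
noncomputable def posPart {k : ℕ} (v : EuclideanSpace ℝ (Fin k)) : EuclideanSpace ℝ (Fin k) :=
  WithLp.toLp 2 (fun i => max (v i) 0)

lemma normsq_eq {k : ℕ} (v : EuclideanSpace ℝ (Fin k)) : ‖v‖ ^ 2 = ∑ i, (v i) ^ 2 := by
  rw [EuclideanSpace.norm_eq]
  rw [Real.sq_sqrt (by positivity)]
  simp [sq_abs]

lemma posPart_normsq_le {k : ℕ} (v w : EuclideanSpace ℝ (Fin k))
    (h0 : ∀ i, 0 ≤ w i) (h : ∀ i, v i ≤ w i) : ‖posPart v‖ ^ 2 ≤ ‖w‖ ^ 2 := by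
  rw [normsq_eq, normsq_eq]
  apply Finset.sum_le_sum
  intro i _
  have hv : posPart v i = max (v i) 0 := rfl
  rw [hv]
  have h1 : (0:ℝ) ≤ max (v i) 0 := le_max_right _ _
  have h2 : max (v i) 0 ≤ w i := max_le (h i) (h0 i)
  nlinarith

/-- Two-sided bound on the minimax value of the augmented Lagrangian
subproblem: `f*_low − Λ²/(2ρ) ≤ inf_{x∈X} sup_{y∈Y} L(x,y,λx,λy;ρ) ≤ F_hi + ‖λy‖²/(2ρ)`. -/
theorem aug_lagrangian_minimax_bounds {n m nt mt : ℕ}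
    (X : Set (EuclideanSpace ℝ (Fin n))) (Y : Set (EuclideanSpace ℝ (Fin m)))
    (hXne : X.Nonempty) (hXcp : IsCompact X) (hXcv : Convex ℝ X)
    (hYne : Y.Nonempty) (hYcp : IsCompact Y) (hYcv : Convex ℝ Y)
    (F : EuclideanSpace ℝ (Fin n) → EuclideanSpace ℝ (Fin m) → ℝ)
    (hFcont : ContinuousOn
      (fun u : (EuclideanSpace ℝ (Fin n)) × (EuclideanSpace ℝ (Fin m)) => F u.1 u.2) (X ×ˢ Y))
    (hFconc : ∀ x ∈ X, ConcaveOn ℝ Y (F x))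
    (c : EuclideanSpace ℝ (Fin n) → EuclideanSpace ℝ (Fin nt))
    (hccont : ContinuousOn c X)
    (d : EuclideanSpace ℝ (Fin n) → EuclideanSpace ℝ (Fin m) → EuclideanSpace ℝ (Fin mt))
    (hdcont : ContinuousOn
      (fun u : (EuclideanSpace ℝ (Fin n)) × (EuclideanSpace ℝ (Fin m)) => d u.1 u.2) (X ×ˢ Y))
    (hdconv : ∀ x ∈ X, ∀ i, ConvexOn ℝ Y (fun y => d x y i))
    (hfeas : ∀ x ∈ X, ∃ y ∈ Y, ∀ i, d x y i ≤ 0)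
    (ρ Λ : ℝ) (hρ : 0 < ρ) (hΛ : 0 < Λ)
    (lx : EuclideanSpace ℝ (Fin nt)) (hlx : ∀ i, 0 ≤ lx i) (hlxΛ : ‖lx‖ ≤ Λ)
    (ly : EuclideanSpace ℝ (Fin mt)) (hly : ∀ i, 0 ≤ ly i)
    (xb : EuclideanSpace ℝ (Fin n)) (hxb : xb ∈ X) (hxbfeas : ∀ i, c xb i ≤ 0) :
    let Lfun : EuclideanSpace ℝ (Fin n) → EuclideanSpace ℝ (Fin m) → ℝ := fun x y =>
      F x y + (‖posPart (lx + ρ • c x)‖ ^ 2 - ‖lx‖ ^ 2) / (2 * ρ)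
        - (‖posPart (ly + ρ • d x y)‖ ^ 2 - ‖ly‖ ^ 2) / (2 * ρ)
    sInf ((fun x => sSup ((fun y => F x y) '' {y ∈ Y | ∀ i, d x y i ≤ 0})) '' X)
        - Λ ^ 2 / (2 * ρ)
      ≤ sInf ((fun x => sSup ((fun y => Lfun x y) '' Y)) '' X)
    ∧ sInf ((fun x => sSup ((fun y => Lfun x y) '' Y)) '' X)
      ≤ sSup ((fun u : (EuclideanSpace ℝ (Fin n)) × (EuclideanSpace ℝ (Fin m)) =>
          F u.1 u.2) '' (X ×ˢ Y)) + ‖ly‖ ^ 2 / (2 * ρ) := by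
  intro Lfun
  obtain ⟨C, hC⟩ := (hXcp.prod hYcp).exists_bound_of_continuousOn hFcont
  have hCF : ∀ x ∈ X, ∀ y ∈ Y, |F x y| ≤ C := by
    intro x hx y hy
    have := hC (x, y) (Set.mk_mem_prod hx hy)
    simpa [Real.norm_eq_abs] using this
  have hρ2 : (0:ℝ) < 2 * ρ := by linarith
  set A : EuclideanSpace ℝ (Fin n) → ℝ :=
    fun x => (‖posPart (lx + ρ • c x)‖ ^ 2 - ‖lx‖ ^ 2) / (2 * ρ) with hAdef
  set B : EuclideanSpace ℝ (Fin n) → EuclideanSpace ℝ (Fin m) → ℝ :=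
    fun x y => (‖posPart (ly + ρ • d x y)‖ ^ 2 - ‖ly‖ ^ 2) / (2 * ρ) with hBdef
  have hLfun : ∀ x y, Lfun x y = F x y + A x - B x y := fun x y => rfl
  -- A is bounded below by -Λ²/(2ρ)
  have hlx2 : ‖lx‖ ^ 2 ≤ Λ ^ 2 := by nlinarith [norm_nonneg lx]
  have hA_lb : ∀ x, -(Λ ^ 2 / (2 * ρ)) ≤ A x := by
    intro x
    have h1 : (0:ℝ) ≤ ‖posPart (lx + ρ • c x)‖ ^ 2 := sq_nonneg _
    show -(Λ ^ 2 / (2 * ρ)) ≤ (‖posPart (lx + ρ • c x)‖ ^ 2 - ‖lx‖ ^ 2) / (2 * ρ)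
    rw [show -(Λ ^ 2 / (2 * ρ)) = -(Λ ^ 2) / (2 * ρ) by ring, div_le_div_iff₀ hρ2 hρ2]
    nlinarith
  -- A xb ≤ 0
  have hA_xb : A xb ≤ 0 := by
    have h1 : ‖posPart (lx + ρ • c xb)‖ ^ 2 ≤ ‖lx‖ ^ 2 := by
      apply posPart_normsq_le _ _ hlx
      intro i
      have hci := hxbfeas i
      have : (lx + ρ • c xb) i = lx i + ρ * c xb i := rfl
      rw [this]
      nlinarith
    apply div_nonpos_of_nonpos_of_nonneg (by linarith) (le_of_lt hρ2)
  -- B is bounded below by -‖ly‖²/(2ρ)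
  have hB_lb : ∀ x y, -(‖ly‖ ^ 2 / (2 * ρ)) ≤ B x y := by
    intro x y
    have h1 : (0:ℝ) ≤ ‖posPart (ly + ρ • d x y)‖ ^ 2 := sq_nonneg _
    show -(‖ly‖ ^ 2 / (2 * ρ)) ≤ (‖posPart (ly + ρ • d x y)‖ ^ 2 - ‖ly‖ ^ 2) / (2 * ρ)
    rw [show -(‖ly‖ ^ 2 / (2 * ρ)) = -(‖ly‖ ^ 2) / (2 * ρ) by ring, div_le_div_iff₀ hρ2 hρ2]
    nlinarith
  -- B x y ≤ 0 when y is feasible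
  have hB_feas : ∀ x y, (∀ i, d x y i ≤ 0) → B x y ≤ 0 := by
    intro x y hd
    have h1 : ‖posPart (ly + ρ • d x y)‖ ^ 2 ≤ ‖ly‖ ^ 2 := by
      apply posPart_normsq_le _ _ hly
      intro i
      have hdi := hd i
      have : (ly + ρ • d x y) i = ly i + ρ * d x y i := rfl
      rw [this]
      nlinarith
    apply div_nonpos_of_nonpos_of_nonneg (by linarith) (le_of_lt hρ2)
  -- BddAbove of inner images
  have hTbdd : ∀ x ∈ X, BddAbove ((fun y => Lfun x y) '' Y) := by
    intro x hx
    refine ⟨C + A x + ‖ly‖ ^ 2 / (2 * ρ), ?_⟩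
    rintro _ ⟨y, hy, rfl⟩
    have hF := (abs_le.mp (hCF x hx y hy)).2
    have hB := hB_lb x y
    show Lfun x y ≤ C + A x + ‖ly‖ ^ 2 / (2 * ρ)
    rw [hLfun]
    linarith
  have hSbdd : ∀ x ∈ X, BddAbove ((fun y => F x y) '' {y ∈ Y | ∀ i, d x y i ≤ 0}) := by
    intro x hx
    refine ⟨C, ?_⟩
    rintro _ ⟨y, ⟨hy, _⟩, rfl⟩
    exact (abs_le.mp (hCF x hx y hy)).2
  -- lower bounds on the inner sups
  have hT_lb : ∀ x ∈ X, -C - Λ ^ 2 / (2 * ρ) ≤ sSup ((fun y => Lfun x y) '' Y) := by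
    intro x hx
    obtain ⟨y0, hy0, hd0⟩ := hfeas x hx
    have hmem : Lfun x y0 ∈ (fun y => Lfun x y) '' Y := ⟨y0, hy0, rfl⟩
    have h1 : -C - Λ ^ 2 / (2 * ρ) ≤ Lfun x y0 := by
      have hF := (abs_le.mp (hCF x hx y0 hy0)).1
      have hA := hA_lb x
      have hB := hB_feas x y0 hd0
      rw [hLfun]
      linarith
    exact le_trans h1 (le_csSup (hTbdd x hx) hmem)
  have hS_lb : ∀ x ∈ X, -C ≤ sSup ((fun y => F x y) '' {y ∈ Y | ∀ i, d x y i ≤ 0}) := by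
    intro x hx
    obtain ⟨y0, hy0, hd0⟩ := hfeas x hx
    have hmem : F x y0 ∈ (fun y => F x y) '' {y ∈ Y | ∀ i, d x y i ≤ 0} :=
      ⟨y0, ⟨hy0, hd0⟩, rfl⟩
    exact le_trans (abs_le.mp (hCF x hx y0 hy0)).1 (le_csSup (hSbdd x hx) hmem)
  constructor
  · -- lower bound
    apply le_csInf (hXne.image _)
    rintro _ ⟨x, hx, rfl⟩
    have h1 : sInf ((fun x => sSup ((fun y => F x y) '' {y ∈ Y | ∀ i, d x y i ≤ 0})) '' X)
        ≤ sSup ((fun y => F x y) '' {y ∈ Y | ∀ i, d x y i ≤ 0}) := by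
      apply csInf_le
      · refine ⟨-C, ?_⟩
        rintro _ ⟨x', hx', rfl⟩
        exact hS_lb x' hx'
      · exact ⟨x, hx, rfl⟩
    obtain ⟨y0, hy0, hd0⟩ := hfeas x hx
    have h2 : sSup ((fun y => F x y) '' {y ∈ Y | ∀ i, d x y i ≤ 0})
        ≤ sSup ((fun y => Lfun x y) '' Y) + Λ ^ 2 / (2 * ρ) := by
      refine csSup_le ⟨F x y0, ⟨y0, ⟨hy0, hd0⟩, rfl⟩⟩ ?_
      rintro _ ⟨y, ⟨hy, hd⟩, rfl⟩
      show F x y ≤ sSup ((fun y => Lfun x y) '' Y) + Λ ^ 2 / (2 * ρ)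
      have hL : F x y ≤ Lfun x y + Λ ^ 2 / (2 * ρ) := by
        have hA := hA_lb x
        have hB := hB_feas x y hd
        rw [hLfun]
        linarith
      have hLe : Lfun x y ≤ sSup ((fun y => Lfun x y) '' Y) :=
        le_csSup (hTbdd x hx) ⟨y, hy, rfl⟩
      calc F x y ≤ Lfun x y + Λ ^ 2 / (2 * ρ) := hL
        _ ≤ sSup ((fun y => Lfun x y) '' Y) + Λ ^ 2 / (2 * ρ) := add_le_add_left hLe _
    linarith
  · -- upper bound
    have h1 : sInf ((fun x => sSup ((fun y => Lfun x y) '' Y)) '' X)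
        ≤ sSup ((fun y => Lfun xb y) '' Y) := by
      apply csInf_le
      · refine ⟨-C - Λ ^ 2 / (2 * ρ), ?_⟩
        rintro _ ⟨x', hx', rfl⟩
        exact hT_lb x' hx'
      · exact ⟨xb, hxb, rfl⟩
    have hFbdd : BddAbove ((fun u : (EuclideanSpace ℝ (Fin n)) × (EuclideanSpace ℝ (Fin m)) =>
        F u.1 u.2) '' (X ×ˢ Y)) := by
      refine ⟨C, ?_⟩
      rintro _ ⟨⟨x, y⟩, hu, rfl⟩
      exact (abs_le.mp (hCF x hu.1 y hu.2)).2
    have h2 : sSup ((fun y => Lfun xb y) '' Y)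
        ≤ sSup ((fun u : (EuclideanSpace ℝ (Fin n)) × (EuclideanSpace ℝ (Fin m)) =>
          F u.1 u.2) '' (X ×ˢ Y)) + ‖ly‖ ^ 2 / (2 * ρ) := by
      apply csSup_le (hYne.image _)
      rintro _ ⟨y, hy, rfl⟩
      have hFhi : F xb y ≤ sSup ((fun u : (EuclideanSpace ℝ (Fin n)) × (EuclideanSpace ℝ (Fin m)) =>
          F u.1 u.2) '' (X ×ˢ Y)) :=
        le_csSup hFbdd ⟨(xb, y), Set.mk_mem_prod hxb hy, rfl⟩
      have hB := hB_lb xb y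
      show Lfun xb y ≤ _
      rw [hLfun]
      linarith
    linarith
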